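/- Let n ≥ 3 and let h₁,…,hₙ be real numbers satisfying 2h₁ = -(h₃+⋯+h_{n-1}) and (h₁+⋯+hₙ)² - (h₁²+⋯+hₙ²) = 1/2. Then it is impossible that all of the quantities h₁ - 1/2, h₂ + 1/2, h₃, …, h_{n-1}, hₙ + 1/2 are negative. -/

import Mathlib

/-- Late-time Hubble rates of the `H₃ × ℝ^{n-3}` vacuum solution (with `k = 1`)
cannot all be negative. -/
theorem stmt_1 (n : ℕ) (hn : 3 ≤ n) (h : ℕ → ℝ)
    (hcon1 : 2 * h 1 = -(∑ i ∈ Finset.Icc 3 (n - 1), h i))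
    (hcon2 : (∑ i ∈ Finset.Icc 1 n, h i) ^ 2 - ∑ i ∈ Finset.Icc 1 n, (h i) ^ 2 = 1 / 2) :
    ¬ (h 1 - 1 / 2 < 0 ∧ h 2 + 1 / 2 < 0 ∧
        (∀ i, 3 ≤ i → i ≤ n - 1 → h i < 0) ∧ h n + 1 / 2 < 0) := by
  rintro ⟨h1lt, h2lt, hmid, hNlt⟩
  set M := Finset.Icc 3 (n - 1) with hM
  set S := ∑ i ∈ M, h i with hSdef
  have hneg : ∀ i ∈ M, h i < 0 := by
    intro i hi
    rw [hM, Finset.mem_Icc] at hi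
    exact hmid i hi.1 hi.2
  have hS0 : S ≤ 0 := Finset.sum_nonpos (fun i hi => le_of_lt (hneg i hi))
  have hSeq : S = -2 * h 1 := by linarith
  have hSgt : -1 < S := by rw [hSeq]; linarith
  have hle : ∀ i ∈ M, S ≤ h i := by
    intro i hi
    have h2 := Finset.single_le_sum (f := fun j => -h j)
      (fun j hj => by simp only [neg_nonneg]; linarith [hneg j hj]) hi
    rw [Finset.sum_neg_distrib] at h2
    have h3 : -h i ≤ -S := h2
    linarith
  have hQ : ∑ i ∈ M, (h i) ^ 2 ≤ S * (h 2 + h n) := by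
    have key : ∀ i ∈ M, (h i) ^ 2 ≤ h i * (h 2 + h n) := by
      intro i hi
      have hi1 := hneg i hi
      have hi2 := hle i hi
      nlinarith
    calc ∑ i ∈ M, (h i) ^ 2 ≤ ∑ i ∈ M, h i * (h 2 + h n) := Finset.sum_le_sum key
      _ = S * (h 2 + h n) := by rw [hSdef, ← Finset.sum_mul]
  have hset : Finset.Icc 1 n = insert 1 (insert 2 (insert n M)) := by
    ext i
    simp only [hM, Finset.mem_Icc, Finset.mem_insert]
    omega
  have hn1 : (1 : ℕ) ∉ insert 2 (insert n M) := by
    simp only [hM, Finset.mem_insert, Finset.mem_Icc]; omega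
  have hn2 : (2 : ℕ) ∉ insert n M := by
    simp only [hM, Finset.mem_insert, Finset.mem_Icc]; omega
  have hnn : n ∉ M := by
    simp only [hM, Finset.mem_Icc]; omega
  have hsum : ∀ f : ℕ → ℝ, ∑ i ∈ Finset.Icc 1 n, f i = f 1 + f 2 + f n + ∑ i ∈ M, f i := by
    intro f
    rw [hset, Finset.sum_insert hn1, Finset.sum_insert hn2, Finset.sum_insert hnn]
    ring
  have e1 : ∑ i ∈ Finset.Icc 1 n, h i = h 1 + h 2 + h n + S := hsum h
  have e2 : ∑ i ∈ Finset.Icc 1 n, (h i) ^ 2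
      = (h 1) ^ 2 + (h 2) ^ 2 + (h n) ^ 2 + ∑ i ∈ M, (h i) ^ 2 := by
    simpa using hsum (fun i => (h i) ^ 2)
  rw [e1, e2] at hcon2
  nlinarith [mul_pos (by linarith : (0:ℝ) < -(h 2) - 1/2) (by linarith : (0:ℝ) < -(h n) - 1/2)]
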